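/- arXiv:1612.00198 — 6 statements merged into one kernel-verified Lean document; each statement's English description precedes it below -/
import Mathlib

section
/- Every Sylow 2-subgroup of the special linear group SL₂(𝔽₅) is isomorphic to the quaternion group Q₈ of order 8. -/
private instance decSL : DecidableEq (Matrix.SpecialLinearGroup (Fin 2) (ZMod 5)) :=
  fun a b => decidable_of_iff (a.1 = b.1) Subtype.ext_iff.symm

private def Asl : Matrix.SpecialLinearGroup (Fin 2) (ZMod 5) := ⟨!![0, -1; 1, 0], by decide⟩
private def Bsl : Matrix.SpecialLinearGroup (Fin 2) (ZMod 5) := ⟨!![0, 2; 2, 0], by decide⟩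

private def q8fun : QuaternionGroup 2 → Matrix.SpecialLinearGroup (Fin 2) (ZMod 5)
  | .a i => Asl ^ i.val
  | .xa i => Bsl * Asl ^ i.val

private def q8hom : QuaternionGroup 2 →* Matrix.SpecialLinearGroup (Fin 2) (ZMod 5) where
  toFun := q8fun
  map_one' := by decide
  map_mul' := by decide

private lemma q8hom_inj : Function.Injective q8hom :=
  (MonoidHom.ker_eq_bot_iff q8hom).mp (by
    rw [Subgroup.eq_bot_iff_forall]
    intro x hx
    have h : q8fun x = 1 := hx
    revert h; revert x
    decide)

set_option maxRecDepth 10000 in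
private lemma cardSL : Nat.card (Matrix.SpecialLinearGroup (Fin 2) (ZMod 5)) = 120 := by
  rw [Nat.card_eq_fintype_card]; decide

/-- Every Sylow 2-subgroup of `SL₂(𝔽₅)` (the binary icosahedral group of order 120)
is isomorphic to the quaternion group `Q₈` of order 8. -/
theorem sylow_two_SL2_F5_iso_quaternion
    (P : Sylow 2 (Matrix.SpecialLinearGroup (Fin 2) (ZMod 5))) :
    Nonempty (P ≃* QuaternionGroup 2) := by
  have hH : Nat.card q8hom.range =
      2 ^ (Nat.card (Matrix.SpecialLinearGroup (Fin 2) (ZMod 5))).factorization 2 := by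
    have h1 : Nat.card q8hom.range = 8 := by
      rw [Nat.card_congr (MonoidHom.ofInjective q8hom_inj).toEquiv.symm,
        Nat.card_eq_fintype_card]
      decide
    have h2 : (Nat.factorization 120) 2 = 3 := by
      have h120 : (120:ℕ) = 2^3 * 15 := by norm_num
      rw [h120, Nat.factorization_mul (by norm_num) (by norm_num),
        Nat.Prime.factorization_pow Nat.prime_two]
      simp [Nat.factorization_eq_zero_of_not_dvd (by norm_num : ¬ 2 ∣ 15)]
    rw [h1, cardSL, h2]; norm_num
  let Q : Sylow 2 (Matrix.SpecialLinearGroup (Fin 2) (ZMod 5)) := Sylow.ofCard q8hom.range hH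
  exact ⟨(Sylow.equiv P Q).trans (MonoidHom.ofInjective q8hom_inj).symm⟩
end

section
/- Every Sylow 2-subgroup of the special linear group SL₂(𝔽₃) is isomorphic to the quaternion group Q₈ of order 8. -/
namespace SylowSL2F3Aux

abbrev G := Matrix.SpecialLinearGroup (Fin 2) (ZMod 3)

def A : G := ⟨!![0, -1; 1, 0], by decide⟩
def B : G := ⟨!![1, 1; 1, -1], by decide⟩

def f : QuaternionGroup 2 → G
  | QuaternionGroup.a i => A ^ i.val
  | QuaternionGroup.xa i => B * A ^ i.val

instance : DecidableEq G := fun a b =>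
  decidable_of_iff (a.val = b.val) Subtype.ext_iff.symm

lemma card_G : Nat.card G = 24 := by
  rw [Nat.card_eq_fintype_card]; decide

lemma fact24 : (Nat.card G).factorization 2 = 3 := by
  rw [card_G, show (24:ℕ) = 2^3 * 3 by norm_num, Nat.factorization_mul (by norm_num) (by norm_num),
    Nat.Prime.factorization_pow Nat.prime_two]
  simp [Nat.factorization_eq_zero_iff]

def fHom : QuaternionGroup 2 →* G where
  toFun := f
  map_one' := by decide
  map_mul' := by decide

lemma f_inj : Function.Injective fHom := by decide

lemma card_range : Nat.card fHom.range = 2 ^ (Nat.card G).factorization 2 := by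
  rw [fact24]
  have : Nat.card fHom.range = Nat.card (QuaternionGroup 2) :=
    Nat.card_congr (MonoidHom.ofInjective f_inj).toEquiv.symm
  rw [this, Nat.card_eq_fintype_card, QuaternionGroup.card]
  norm_num

end SylowSL2F3Aux

/-- Every Sylow 2-subgroup of `SL₂(𝔽₃)` (the binary tetrahedral group of order 24)
is isomorphic to the quaternion group `Q₈` of order 8. -/
theorem sylow_two_SL2_F3_iso_quaternion
    (P : Sylow 2 (Matrix.SpecialLinearGroup (Fin 2) (ZMod 3))) :
    Nonempty (P ≃* QuaternionGroup 2) := by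
  open SylowSL2F3Aux in
  exact ⟨(Sylow.equiv P (Sylow.ofCard fHom.range card_range)).trans
    (MonoidHom.ofInjective f_inj).symm⟩
end

section
/- Let k ≥ 1 be a natural number and write k = 2^a · m with m odd. Then every Sylow 2-subgroup of the generalized quaternion (dicyclic) group Q_{4k} of order 4k is isomorphic to the dicyclic group of order 2^{a+2}. -/
/-- A compatible additive hom of `ZMod`s induces a hom of quaternion groups. -/
def quatCongrHom {n k : ℕ} (f : ZMod (2 * n) →+ ZMod (2 * k))
    (hf : f (n : ZMod (2 * n)) = (k : ZMod (2 * k))) :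
    QuaternionGroup n →* QuaternionGroup k where
  toFun x :=
    match x with
    | .a i => .a (f i)
    | .xa i => .xa (f i)
  map_one' := by
    show QuaternionGroup.a (f 0) = 1
    rw [map_zero, QuaternionGroup.one_def]
  map_mul' x y := by
    rcases x with i | i <;> rcases y with j | j
    · show QuaternionGroup.a (f (i + j)) = QuaternionGroup.a (f i) * QuaternionGroup.a (f j)
      rw [QuaternionGroup.a_mul_a, map_add]
    · show QuaternionGroup.xa (f (j - i)) = QuaternionGroup.a (f i) * QuaternionGroup.xa (f j)
      rw [QuaternionGroup.a_mul_xa, map_sub]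
    · show QuaternionGroup.xa (f (i + j)) = QuaternionGroup.xa (f i) * QuaternionGroup.a (f j)
      rw [QuaternionGroup.xa_mul_a, map_add]
    · show QuaternionGroup.a (f (n + j - i)) = QuaternionGroup.xa (f i) * QuaternionGroup.xa (f j)
      rw [QuaternionGroup.xa_mul_xa, map_sub, map_add, hf]

theorem quatCongrHom_injective {n k : ℕ} (f : ZMod (2 * n) →+ ZMod (2 * k))
    (hf : f (n : ZMod (2 * n)) = (k : ZMod (2 * k))) (hfi : Function.Injective f) :
    Function.Injective (quatCongrHom f hf) := by
  rintro (i | i) (j | j) h <;>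
    simp only [quatCongrHom, MonoidHom.coe_mk, OneHom.coe_mk] at h <;>
    first
      | (injection h with h; rw [hfi h])
      | exact absurd h (by simp)

/-- Let `k ≥ 1` with `k = 2 ^ a * m`, `m` odd.  Every Sylow 2-subgroup of the
generalized quaternion (dicyclic) group `Q_{4k}` of order `4k` is isomorphic to the
dicyclic group of order `2 ^ (a + 2)`. -/
theorem sylow_two_quaternionGroup_iso
    (k a m : ℕ) (hk : 1 ≤ k) (hm : Odd m) (hkam : k = 2 ^ a * m)
    (P : Sylow 2 (QuaternionGroup k)) :
    Nonempty (P ≃* QuaternionGroup (2 ^ a)) := by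
  have hm0 : m ≠ 0 := by rintro rfl; simp at hm
  have hm2 : ¬ (2 ∣ m) := by
    rcases hm with ⟨t, rfl⟩; omega
  haveI : NeZero k := ⟨by omega⟩
  -- the additive hom `ZMod (2 * 2^a) →+ ZMod (2 * k)`, multiplication by `m`
  have hker : ((AddMonoidHom.mulLeft (m : ZMod (2 * k))).comp
      (Int.castAddHom (ZMod (2 * k)))) ((2 * 2 ^ a : ℕ) : ℤ) = 0 := by
    simp only [AddMonoidHom.coe_comp, Function.comp_apply, Int.coe_castAddHom,
      AddMonoidHom.coe_mulLeft]
    have : ((m : ZMod (2 * k)) * ((2 * 2 ^ a : ℕ) : ℤ) : ZMod (2 * k)) = ((2 * k : ℕ) : ZMod (2 * k)) := by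
      rw [hkam]; push_cast; ring
    rw [this, ZMod.natCast_self]
  set f : ZMod (2 * 2 ^ a) →+ ZMod (2 * k) :=
    ZMod.lift (2 * 2 ^ a) ⟨(AddMonoidHom.mulLeft (m : ZMod (2 * k))).comp
      (Int.castAddHom (ZMod (2 * k))), hker⟩ with hf_def
  have hfnat : ∀ x : ℕ, f ((x : ℕ) : ZMod (2 * 2 ^ a)) = ((m * x : ℕ) : ZMod (2 * k)) := by
    intro x
    have : ((x : ℕ) : ZMod (2 * 2 ^ a)) = ((x : ℤ) : ZMod (2 * 2 ^ a)) := by push_cast; rfl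
    rw [this, hf_def, ZMod.lift_coe]
    simp only [AddMonoidHom.coe_comp, Function.comp_apply, Int.coe_castAddHom,
      AddMonoidHom.coe_mulLeft]
    push_cast; ring
  have hf : f ((2 ^ a : ℕ) : ZMod (2 * 2 ^ a)) = ((k : ℕ) : ZMod (2 * k)) := by
    rw [hfnat, hkam, Nat.mul_comm m (2 ^ a)]
  have hfi : Function.Injective f := by
    rw [injective_iff_map_eq_zero]
    intro x hx
    haveI : NeZero (2 * 2 ^ a) := ⟨by positivity⟩
    have hxv : ((x.val : ℕ) : ZMod (2 * 2 ^ a)) = x := by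
      rw [ZMod.natCast_val, ZMod.cast_id]
    rw [← hxv, hfnat, ZMod.natCast_eq_zero_iff] at hx
    have hdvd : 2 * 2 ^ a ∣ x.val := by
      rcases hx with ⟨c, hc⟩
      rw [hkam] at hc
      refine ⟨c, Nat.eq_of_mul_eq_mul_left (Nat.pos_of_ne_zero hm0) ?_⟩
      calc m * x.val = 2 * (2 ^ a * m) * c := hc
        _ = m * (2 * 2 ^ a * c) := by ring
    have hv0 : x.val = 0 := Nat.eq_zero_of_dvd_of_lt hdvd (ZMod.val_lt x)
    rw [← hxv, hv0, Nat.cast_zero]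
  have hinj : Function.Injective (quatCongrHom f hf) := quatCongrHom_injective f hf hfi
  -- the image is a Sylow 2-subgroup
  haveI : NeZero (2 ^ a) := ⟨by positivity⟩
  let Q : Subgroup (QuaternionGroup k) := (quatCongrHom f hf).range
  have hQcard : Nat.card Q = 2 ^ (a + 2) := by
    have e : QuaternionGroup (2 ^ a) ≃* Q := MonoidHom.ofInjective hinj
    rw [← Nat.card_congr e.toEquiv, Nat.card_eq_fintype_card, QuaternionGroup.card]
    ring
  have hGcard : Nat.card (QuaternionGroup k) = 2 ^ (a + 2) * m := by
    rw [Nat.card_eq_fintype_card, QuaternionGroup.card, hkam]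
    ring
  have hfact : (Nat.card (QuaternionGroup k)).factorization 2 = a + 2 := by
    rw [hGcard, Nat.factorization_mul (by positivity) hm0,
      Nat.Prime.factorization_pow Nat.prime_two]
    simp [Nat.factorization_eq_zero_of_not_dvd hm2]
  let S : Sylow 2 (QuaternionGroup k) := Sylow.ofCard Q (by rw [hQcard, hfact])
  have eS : (S : Subgroup (QuaternionGroup k)) = Q := rfl
  exact ⟨(Sylow.equiv P S).trans (MonoidHom.ofInjective hinj).symm⟩
end

section
/- For every odd prime p and every natural number k ≥ 1, every Sylow p-subgroup of the generalized quaternion (dicyclic) group Q_{4k} of order 4k is cyclic. -/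
/-- For every odd prime `p` and every `k ≥ 1`, every Sylow `p`-subgroup of the
generalized quaternion (dicyclic) group `Q_{4k}` of order `4k` is cyclic. -/
theorem sylow_odd_quaternionGroup_isCyclic
    (p : ℕ) (hp : p.Prime) (hodd : Odd p) (k : ℕ) (hk : 1 ≤ k)
    (P : Sylow p (QuaternionGroup k)) :
    IsCyclic P := by
  haveI : NeZero k := ⟨by omega⟩
  have hle : (P : Subgroup (QuaternionGroup k)) ≤
      Subgroup.zpowers (QuaternionGroup.a 1) := by
    intro g hg
    obtain ⟨m, hm⟩ := P.2 ⟨g, hg⟩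
    have hm' : orderOf g ∣ p ^ m := by
      have := orderOf_dvd_of_pow_eq_one (congrArg Subtype.val hm)
      simpa [orderOf_submonoid] using this
    cases g with
    | a i =>
        refine ⟨(i.val : ℤ), ?_⟩
        show QuaternionGroup.a 1 ^ (i.val : ℤ) = QuaternionGroup.a i
        rw [zpow_natCast, QuaternionGroup.a_one_pow]
        congr 1
        simp [ZMod.natCast_val, ZMod.cast_id]
    | xa i =>
        exfalso
        rw [QuaternionGroup.orderOf_xa] at hm'
        have h2 : 2 ∣ p ^ m := dvd_trans (by norm_num) hm'
        have h2p : 2 ∣ p := Nat.Prime.dvd_of_dvd_pow Nat.prime_two h2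
        have : p = 2 := ((Nat.prime_dvd_prime_iff_eq Nat.prime_two hp).mp h2p).symm
        subst this
        exact (Nat.not_odd_iff_even.mpr (by norm_num)) hodd
  haveI : IsCyclic (Subgroup.zpowers (QuaternionGroup.a 1 : QuaternionGroup k)) :=
    ⟨⟨⟨_, Subgroup.mem_zpowers _⟩, fun x => by
      obtain ⟨x, n, rfl⟩ := x
      exact ⟨n, by ext; simp⟩⟩⟩
  exact isCyclic_of_surjective _ (Subgroup.subgroupOfEquivOfLe hle).surjective
end

section
/- Let S be a finite set, y ∈ S, let F be the free group on S, and let A = ⟨y⟩ be the cyclic subgroup of F generated by the basis element y. Then the HNN extension of F over the identity isomorphism A → A (i.e., the group obtained from F by adjoining a stable letter t with t a t⁻¹ = a for all a ∈ A) is isomorphic to the free product (ℤ × ℤ) ∗ F', where F' is the free group on S ∖ {y}. -/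
open HNNExtension Monoid
open scoped Classical

section Aux

variable (S : Type*) (y : S)

private abbrev Fgrp := FreeGroup S
private abbrev Agrp := Subgroup.zpowers (FreeGroup.of y)
private abbrev Hgrp := HNNExtension (FreeGroup S) (Agrp S y) (Agrp S y) (MulEquiv.refl _)
private abbrev Cgrp := Monoid.Coprod (Multiplicative (ℤ × ℤ)) (FreeGroup {s : S // s ≠ y})

private noncomputable def fG : FreeGroup S →* Cgrp S y :=
  FreeGroup.lift fun s =>
    if h : s = y then Coprod.inl (Multiplicative.ofAdd ((1 : ℤ), (0 : ℤ)))
    else Coprod.inr (FreeGroup.of ⟨s, h⟩)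

private lemma fG_y : fG S y (FreeGroup.of y) =
    Coprod.inl (Multiplicative.ofAdd ((1 : ℤ), (0 : ℤ))) := by
  simp [fG]

private lemma fG_y_zpow (m : ℤ) : fG S y ((FreeGroup.of y) ^ m) =
    Coprod.inl (Multiplicative.ofAdd ((m : ℤ), (0 : ℤ))) := by
  rw [map_zpow, fG_y, ← map_zpow (Coprod.inl : Multiplicative (ℤ × ℤ) →* Cgrp S y),
    ← ofAdd_zsmul]
  simp

private lemma hx : ∀ a : Agrp S y,
    Coprod.inl (M := Multiplicative (ℤ × ℤ)) (N := FreeGroup {s : S // s ≠ y})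
        (Multiplicative.ofAdd ((0 : ℤ), (1 : ℤ))) * fG S y a =
      fG S y ((MulEquiv.refl (Agrp S y)) a : FreeGroup S) *
        Coprod.inl (Multiplicative.ofAdd ((0 : ℤ), (1 : ℤ))) := by
  rintro ⟨a, m, rfl⟩
  show Coprod.inl (Multiplicative.ofAdd ((0 : ℤ), (1 : ℤ))) * fG S y ((FreeGroup.of y) ^ m) =
    fG S y ((FreeGroup.of y) ^ m) * Coprod.inl (Multiplicative.ofAdd ((0 : ℤ), (1 : ℤ)))
  rw [fG_y_zpow, ← map_mul (Coprod.inl : Multiplicative (ℤ × ℤ) →* Cgrp S y),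
    ← map_mul (Coprod.inl : Multiplicative (ℤ × ℤ) →* Cgrp S y), mul_comm]

private noncomputable def toC : Hgrp S y →* Cgrp S y :=
  HNNExtension.lift (fG S y) (Coprod.inl (Multiplicative.ofAdd ((0 : ℤ), (1 : ℤ)))) (hx S y)

private lemma comm_oy_t :
    ∀ (m n : Multiplicative ℤ),
      Commute ((zpowersHom (Hgrp S y) (of (FreeGroup.of y))) m)
        ((zpowersHom (Hgrp S y) t) n) := by
  intro m n
  have h : Commute (of (FreeGroup.of y) : Hgrp S y) t := by
    have := HNNExtension.t_mul_of (G := FreeGroup S) (A := Agrp S y) (B := Agrp S y)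
      (φ := MulEquiv.refl _) ⟨FreeGroup.of y, Subgroup.mem_zpowers _⟩
    simpa [Commute, SemiconjBy] using this.symm
  exact (h.zpow_zpow _ _)

private noncomputable def toH : Cgrp S y →* Hgrp S y :=
  Coprod.lift
    (((zpowersHom (Hgrp S y) (of (FreeGroup.of y))).noncommCoprod
        (zpowersHom (Hgrp S y) t) (comm_oy_t S y)).comp
      (MulEquiv.prodMultiplicative ℤ ℤ).toMonoidHom)
    (FreeGroup.lift fun s => of (FreeGroup.of s.1))

private lemma toH_inl (m n : ℤ) :
    toH S y (Coprod.inl (Multiplicative.ofAdd (m, n))) =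
      (of (FreeGroup.of y) : Hgrp S y) ^ m * t ^ n := rfl

private lemma toC_toH : (toC S y).comp (toH S y) = MonoidHom.id _ := by
  apply Coprod.hom_ext
  · ext z
    obtain ⟨m, n⟩ := z
    show toC S y (toH S y (Coprod.inl (Multiplicative.ofAdd (m, n)))) =
      Coprod.inl (Multiplicative.ofAdd (m, n))
    rw [toH_inl, map_mul, map_zpow, map_zpow]
    simp only [toC, HNNExtension.lift_of, HNNExtension.lift_t, fG_y]
    rw [← map_zpow (Coprod.inl : Multiplicative (ℤ × ℤ) →* Cgrp S y),
      ← map_zpow (Coprod.inl : Multiplicative (ℤ × ℤ) →* Cgrp S y), ← map_mul,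
      ← ofAdd_zsmul, ← ofAdd_zsmul, ← ofAdd_add]
    simp [Prod.ext_iff]
  · ext s
    show toC S y (toH S y (Coprod.inr (FreeGroup.of s))) = _
    have : toH S y (Coprod.inr (FreeGroup.of s)) = of (FreeGroup.of s.1) := by
      simp [toH]
    rw [this]
    simp [toC, fG, s.2]

private lemma toH_toC : (toH S y).comp (toC S y) = MonoidHom.id _ := by
  apply HNNExtension.hom_ext
  · ext s
    show toH S y (toC S y (of (FreeGroup.of s))) = of (FreeGroup.of s)
    simp only [toC, HNNExtension.lift_of, fG, FreeGroup.lift_apply_of]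
    by_cases h : s = y
    · subst h
      rw [dif_pos rfl, toH_inl]
      simp
    · simp [dif_neg h, toH]
  · show toH S y (toC S y t) = t
    simp only [toC, HNNExtension.lift_t]
    rw [toH_inl]
    simp

end Aux

/-- Let `S` be a finite set, `y ∈ S`, `F` the free group on `S`, and `A = ⟨y⟩` the
cyclic subgroup generated by the basis element `y`.  The HNN extension of `F` over
the identity isomorphism `A → A` is isomorphic to the free product
`(ℤ × ℤ) ∗ F'`, where `F'` is the free group on `S ∖ {y}`. -/
theorem hnn_over_identity_of_basis_element
    (S : Type*) [Finite S] (y : S) :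
    Nonempty
      (HNNExtension (FreeGroup S)
          (Subgroup.zpowers (FreeGroup.of y)) (Subgroup.zpowers (FreeGroup.of y))
          (MulEquiv.refl _) ≃*
        Monoid.Coprod (Multiplicative (ℤ × ℤ)) (FreeGroup {s : S // s ≠ y})) := by
  exact ⟨MonoidHom.toMulEquiv (toC S y) (toH S y) (toH_toC S y) (toC_toH S y)⟩
end

section
/- Let S be a finite set, let y₁ ≠ y₂ be two distinct elements of S, let F be the free group on S, and let φ : ⟨y₁⟩ → ⟨y₂⟩ be the isomorphism between the cyclic subgroups of F generated by the basis elements y₁ and y₂ sending y₁ to y₂. Then the HNN extension of F over φ is a free group; in fact it is isomorphic to the free group on the set (S ∖ {y₂}) ⊔ {t}, where t denotes the stable letter. -/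
/-- Let `S` be a finite set, `y₁ ≠ y₂` two distinct elements of `S`, `F` the free
group on `S`, and `φ : ⟨y₁⟩ → ⟨y₂⟩` the isomorphism of cyclic subgroups sending
`y₁` to `y₂`.  The HNN extension of `F` over `φ` is a free group: it is isomorphic
to the free group on `(S ∖ {y₂}) ⊔ {t}`, where `t` is the stable letter. -/
theorem hnn_conjugating_distinct_basis_elements_isFree
    (S : Type*) [Finite S] (y₁ y₂ : S) (hy : y₁ ≠ y₂)
    (φ : Subgroup.zpowers (FreeGroup.of y₁) ≃* Subgroup.zpowers (FreeGroup.of y₂))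
    (hφ : (φ ⟨FreeGroup.of y₁, Subgroup.mem_zpowers _⟩ : FreeGroup S) = FreeGroup.of y₂) :
    Nonempty
      (HNNExtension (FreeGroup S)
          (Subgroup.zpowers (FreeGroup.of y₁)) (Subgroup.zpowers (FreeGroup.of y₂)) φ ≃*
        FreeGroup ({s : S // s ≠ y₂} ⊕ Unit)) := by
  classical
  set T := ({s : S // s ≠ y₂} ⊕ Unit)
  set τ : FreeGroup T := FreeGroup.of (Sum.inr ()) with hτ
  set X : FreeGroup T := FreeGroup.of (Sum.inl ⟨y₁, hy⟩) with hX
  set f₀ : FreeGroup S →* FreeGroup T :=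
    FreeGroup.lift (fun s => if h : s = y₂ then τ * X * τ⁻¹
      else FreeGroup.of (Sum.inl ⟨s, h⟩)) with hf₀
  have hf₀y₁ : f₀ (FreeGroup.of y₁) = X := by simp [hf₀, hy, hX]
  have hf₀y₂ : f₀ (FreeGroup.of y₂) = τ * X * τ⁻¹ := by simp [hf₀]
  have key : ∀ a : Subgroup.zpowers (FreeGroup.of y₁),
      τ * f₀ ↑a = f₀ (φ a : FreeGroup S) * τ := by
    rintro ⟨a, ha⟩
    obtain ⟨k, rfl⟩ := Subgroup.mem_zpowers_iff.mp ha
    have h1 : (⟨FreeGroup.of y₁ ^ k, ha⟩ : Subgroup.zpowers (FreeGroup.of y₁))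
        = (⟨FreeGroup.of y₁, Subgroup.mem_zpowers _⟩ : Subgroup.zpowers (FreeGroup.of y₁)) ^ k := by
      ext; simp
    rw [h1, map_zpow]
    push_cast
    rw [hφ, map_zpow, map_zpow, hf₀y₁, hf₀y₂, conj_zpow]
    simp [mul_assoc]
  set fH := HNNExtension.lift f₀ τ key with hfH
  set g : FreeGroup T →* HNNExtension (FreeGroup S)
      (Subgroup.zpowers (FreeGroup.of y₁)) (Subgroup.zpowers (FreeGroup.of y₂)) φ :=
    FreeGroup.lift (Sum.elim (fun s => HNNExtension.of (FreeGroup.of s.1))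
      (fun _ => HNNExtension.t)) with hg
  refine ⟨MonoidHom.toMulEquiv fH g ?_ ?_⟩
  · apply HNNExtension.hom_ext
    · ext s
      simp only [MonoidHom.comp_apply, MonoidHom.id_apply, hfH, HNNExtension.lift_of]
      by_cases h : s = y₂
      · rw [h, hf₀y₂]
        simp only [map_mul, map_inv, hg, hτ, hX, FreeGroup.lift_apply_of, Sum.elim_inl, Sum.elim_inr]
        exact (HNNExtension.equiv_eq_conj (φ := φ)
          ⟨FreeGroup.of y₁, Subgroup.mem_zpowers _⟩).symm.trans
          (congrArg HNNExtension.of hφ)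
      · simp [hf₀, h, hg]
    · simp [hfH, hg, hτ]
  · ext x
    cases x with
    | inl s => simp [hfH, hg, hf₀, s.2]
    | inr u => simp [hfH, hg, hτ]
end
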